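/- Equivalence of the rounding problem over the L¹ ball and over the full feasible set: let B ∈ ℤ_{≥0}, L ∈ ℤ_{≥1}, W = { w ∈ ℝⁿ : 0 ≤ wᵢ ≤ L for all i, and ∑ᵢ |wᵢ − 1| ≤ B }, and let w ∈ W. Let B₁(1, B) = { v ∈ ℝⁿ : ∑ᵢ |vᵢ − 1| ≤ B }. Then every minimizer w* of ‖w' − w‖₂² over w' ∈ ℤⁿ ∩ B₁(1, B) satisfies |w*ᵢ − 1| ≤ |wᵢ − 1| + 1/2 for all i, hence 0 ≤ w*ᵢ ≤ L; consequently the set of minimizers over ℤⁿ ∩ B₁(1, B) equals the set of minimizers over ℤⁿ ∩ W. -/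
import Mathlib

open scoped BigOperators

lemma clamp_abs' {a L : ℝ} (hL : 1 ≤ L) : |max 0 (min a L) - 1| ≤ |a - 1| := by
  rcases le_total a 0 with h | h
  · rw [min_eq_left (le_trans h (by linarith)), max_eq_left h]
    rw [abs_of_nonpos (by norm_num), abs_of_nonpos (by linarith)]
    linarith
  · rcases le_total a L with h2 | h2
    · rw [min_eq_left h2, max_eq_right h]
    · rw [min_eq_right h2, max_eq_right (by linarith)]
      rw [abs_of_nonneg (by linarith), abs_of_nonneg (by linarith)]
      linarith

lemma clamp_sq' {a L t : ℝ} (h0 : 0 ≤ t) (hT : t ≤ L) :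
    (max 0 (min a L) - t) ^ 2 ≤ (a - t) ^ 2 := by
  rcases le_total a 0 with h | h
  · rw [min_eq_left (le_trans h (by linarith)), max_eq_left h]
    nlinarith
  · rcases le_total a L with h2 | h2
    · rw [min_eq_left h2, max_eq_right h]
    · rw [min_eq_right h2, max_eq_right (by linarith)]
      nlinarith

lemma swap_key {n : ℕ} {B : ℝ} {w wstar : Fin n → ℝ}
    (hint : ∀ i, ∃ k : ℤ, wstar i = (k : ℝ))
    (hball : ∑ i, |wstar i - 1| ≤ B)
    (hmin : ∀ w' : Fin n → ℝ, (∀ i, ∃ k : ℤ, w' i = (k : ℝ)) → ∑ i, |w' i - 1| ≤ B →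
        ∑ i, (wstar i - w i) ^ 2 ≤ ∑ i, (w' i - w i) ^ 2)
    (i : Fin n) (c : ℝ) (hc : ∃ k : ℤ, c = (k : ℝ)) (hle : |c - 1| ≤ |wstar i - 1|) :
    (wstar i - w i) ^ 2 ≤ (c - w i) ^ 2 := by
  set w' := Function.update wstar i c with hw'
  have hint' : ∀ j, ∃ k : ℤ, w' j = (k : ℝ) := by
    intro j
    by_cases h : j = i
    · subst h; simpa [hw'] using hc
    · simpa [hw', Function.update_of_ne h] using hint j
  have habs : ∀ j, |w' j - 1| = Function.update (fun j => |wstar j - 1|) i |c - 1| j := by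
    intro j; by_cases h : j = i <;> simp [hw', Function.update_apply, h]
  have hsq : ∀ j, (w' j - w j) ^ 2
      = Function.update (fun j => (wstar j - w j) ^ 2) i ((c - w i) ^ 2) j := by
    intro j; by_cases h : j = i <;> simp [hw', Function.update_apply, h]
  have split1 : ∑ j, |wstar j - 1| = |wstar i - 1| + ∑ j ∈ Finset.univ \ {i}, |wstar j - 1| := by
    rw [← Finset.erase_eq]
    exact (Finset.add_sum_erase _ (fun j => |wstar j - 1|) (Finset.mem_univ i)).symm
  have split2 : ∑ j, (wstar j - w j) ^ 2
      = (wstar i - w i) ^ 2 + ∑ j ∈ Finset.univ \ {i}, (wstar j - w j) ^ 2 := by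
    rw [← Finset.erase_eq]
    exact (Finset.add_sum_erase _ (fun j => (wstar j - w j) ^ 2) (Finset.mem_univ i)).symm
  have hsum1 : ∑ j, |w' j - 1| ≤ B := by
    rw [Finset.sum_congr rfl fun j _ => habs j,
      Finset.sum_update_of_mem (Finset.mem_univ i)]
    rw [split1] at hball
    linarith
  have h2 := hmin w' hint' hsum1
  rw [Finset.sum_congr rfl fun j _ => hsq j,
    Finset.sum_update_of_mem (Finset.mem_univ i), split2] at h2
  linarith

theorem rounding_ball_equiv (n : ℕ) (B L : ℤ) (hB : 0 ≤ B) (hL : 1 ≤ L)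
    (W : Set (Fin n → ℝ))
    (hW : W = {v | (∀ i, 0 ≤ v i ∧ v i ≤ (L : ℝ)) ∧ ∑ i, |v i - 1| ≤ (B : ℝ)})
    (Ball : Set (Fin n → ℝ)) (hBall : Ball = {v | ∑ i, |v i - 1| ≤ (B : ℝ)})
    (w : Fin n → ℝ) (hw : w ∈ W) :
    (∀ wstar : Fin n → ℝ, (∀ i, ∃ k : ℤ, wstar i = (k : ℝ)) → wstar ∈ Ball →
      (∀ w' : Fin n → ℝ, (∀ i, ∃ k : ℤ, w' i = (k : ℝ)) → w' ∈ Ball →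
        ∑ i, (wstar i - w i) ^ 2 ≤ ∑ i, (w' i - w i) ^ 2) →
      (∀ i, |wstar i - 1| ≤ |w i - 1| + 1 / 2) ∧
        (∀ i, 0 ≤ wstar i ∧ wstar i ≤ (L : ℝ))) ∧
    {v | (∀ i, ∃ k : ℤ, v i = (k : ℝ)) ∧ v ∈ Ball ∧
        ∀ w' : Fin n → ℝ, (∀ i, ∃ k : ℤ, w' i = (k : ℝ)) → w' ∈ Ball →
          ∑ i, (v i - w i) ^ 2 ≤ ∑ i, (w' i - w i) ^ 2}
      = {v | (∀ i, ∃ k : ℤ, v i = (k : ℝ)) ∧ v ∈ W ∧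
          ∀ w' : Fin n → ℝ, (∀ i, ∃ k : ℤ, w' i = (k : ℝ)) → w' ∈ W →
            ∑ i, (v i - w i) ^ 2 ≤ ∑ i, (w' i - w i) ^ 2} := by
  subst hW hBall
  obtain ⟨hwbd, hwB⟩ := hw
  -- per-coordinate analysis for any minimizer over the ball
  have coord : ∀ wstar : Fin n → ℝ, (∀ i, ∃ k : ℤ, wstar i = (k : ℝ)) →
      (∑ i, |wstar i - 1| ≤ (B : ℝ)) →
      (∀ w' : Fin n → ℝ, (∀ i, ∃ k : ℤ, w' i = (k : ℝ)) → (∑ i, |w' i - 1| ≤ (B : ℝ)) →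
        ∑ i, (wstar i - w i) ^ 2 ≤ ∑ i, (w' i - w i) ^ 2) →
      ∀ i, (|wstar i - 1| ≤ |w i - 1| + 1 / 2) ∧ 0 ≤ wstar i ∧ wstar i ≤ (L : ℝ) := by
    intro wstar hint hball hmin i
    obtain ⟨k, hk⟩ := hint i
    obtain ⟨hw0, hwL⟩ := hwbd i
    have habs1 : w i - 1 ≤ |w i - 1| := le_abs_self _
    have habs2 : -(w i - 1) ≤ |w i - 1| := neg_le_abs _
    have hLr : (1 : ℝ) ≤ (L : ℝ) := by exact_mod_cast hL
    have hcase : k ≤ 0 ∨ k = 1 ∨ 2 ≤ k := by omega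
    rcases hcase with h | h | h
    · -- move up by one
      have hkr : (k : ℝ) ≤ 0 := by exact_mod_cast h
      have key := swap_key hint hball hmin i ((k : ℝ) + 1) ⟨k + 1, by push_cast; ring⟩ ?_
      · have hstep : w i - (k : ℝ) ≤ 1 / 2 := by nlinarith [key, hk]
        rw [hk] at *
        have hk0 : (0 : ℝ) ≤ (k : ℝ) := by
          have : (-1 : ℝ) < (k : ℝ) := by linarith
          have : (-1 : ℤ) < k := by exact_mod_cast this
          exact_mod_cast by omega
        refine ⟨?_, hk0, by linarith⟩
        rw [abs_of_nonpos (by linarith)]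
        linarith
      · rw [hk, show ((k : ℝ) + 1) - 1 = (k : ℝ) by ring,
          abs_of_nonpos hkr, abs_of_nonpos (by linarith)]
        linarith
    · subst h
      refine ⟨?_, ?_, ?_⟩
      · rw [hk]
        have h0 : |(↑(1:ℤ) : ℝ) - 1| = 0 := by norm_num
        rw [h0]
        linarith [abs_nonneg (w i - 1)]
      · rw [hk]; norm_num
      · rw [hk]
        exact_mod_cast hL
    · -- move down by one
      have hkr : (2 : ℝ) ≤ (k : ℝ) := by exact_mod_cast h
      have key := swap_key hint hball hmin i ((k : ℝ) - 1) ⟨k - 1, by push_cast; ring⟩ ?_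
      · have hstep : (k : ℝ) - w i ≤ 1 / 2 := by nlinarith [key, hk]
        rw [hk] at *
        have hkL : (k : ℝ) ≤ (L : ℝ) := by
          have : (k : ℝ) < (L : ℝ) + 1 := by linarith
          have : k < L + 1 := by exact_mod_cast this
          exact_mod_cast by omega
        refine ⟨?_, by linarith, hkL⟩
        rw [abs_of_nonneg (by linarith)]
        linarith
      · rw [hk, abs_of_nonneg (by linarith : (0:ℝ) ≤ (k : ℝ) - 1 - 1),
          abs_of_nonneg (by linarith)]
        linarith
  constructor
  · intro wstar hint hball hmin
    have h := coord wstar hint hball (fun w' h1 h2 => hmin w' h1 h2)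
    exact ⟨fun i => (h i).1, fun i => (h i).2⟩
  · ext v
    simp only [Set.mem_setOf_eq]
    constructor
    · rintro ⟨hint, hball, hmin⟩
      have h := coord v hint hball hmin
      exact ⟨hint, ⟨fun i => (h i).2, hball⟩, fun w' h1 h2 => hmin w' h1 h2.2⟩
    · rintro ⟨hint, ⟨hvbd, hvB⟩, hmin⟩
      refine ⟨hint, hvB, ?_⟩
      intro w' hint' hball'
      set w'' : Fin n → ℝ := fun j => max 0 (min (w' j) (L : ℝ)) with hw''
      have hLr : (1 : ℝ) ≤ (L : ℝ) := by exact_mod_cast hL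
      have hint'' : ∀ j, ∃ k : ℤ, w'' j = (k : ℝ) := by
        intro j
        obtain ⟨k, hk⟩ := hint' j
        exact ⟨max 0 (min k L), by rw [hw'']; push_cast [hk]; ring⟩
      have hmem : w'' ∈ {v : Fin n → ℝ |
          (∀ i, 0 ≤ v i ∧ v i ≤ (L : ℝ)) ∧ ∑ i, |v i - 1| ≤ (B : ℝ)} := by
        constructor
        · intro j
          exact ⟨le_max_left _ _, max_le (by linarith) (min_le_right _ _)⟩
        · calc ∑ j, |w'' j - 1| ≤ ∑ j, |w' j - 1| :=
              Finset.sum_le_sum fun j _ => clamp_abs' hLr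
            _ ≤ (B : ℝ) := hball'
      calc ∑ j, (v j - w j) ^ 2 ≤ ∑ j, (w'' j - w j) ^ 2 := hmin w'' hint'' hmem
        _ ≤ ∑ j, (w' j - w j) ^ 2 :=
            Finset.sum_le_sum fun j _ => clamp_sq' (hwbd j).1 (hwbd j).2
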